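/- For every odd n = 2k+1 with k ≥ 1, the value of f_n at −2 satisfies f_n(−2) = sin(kπ/2) + cos(kπ/2); in particular f_n(−2) equals 1 if k ≡ 0 or 1 (mod 4) and equals −1 if k ≡ 2 or 3 (mod 4), so f_n(−2) = ±1. -/

import Mathlib

noncomputable section

open Polynomial

/-- `ψ^i(X) := Σ_{j=1}^{i} (C(i,j)·C(i+j−1,j)/C(2j−1,j))·X^j ∈ ℚ[X]`; `ψ^0 = 0`. -/
def psiPoly (i : ℕ) : ℚ[X] :=
  ∑ j ∈ Finset.Icc 1 i,
    C (((i.choose j : ℚ) * ((i + j - 1).choose j : ℚ)) / ((2 * j - 1).choose j : ℚ)) * X ^ j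

/-- For odd `n ≥ 3`,
`f_n(X) := n + Σ_{j=1}^{(n−3)/2} (n·(n²−1²)·(n²−3²)⋯(n²−(2j−1)²)/(2^{2j}·(2j+1)!))·X^j
  + X^{(n−1)/2} ∈ ℚ[X]`. -/
def fPoly (n : ℕ) : ℚ[X] :=
  C (n : ℚ) +
    ∑ j ∈ Finset.Icc 1 ((n - 3) / 2),
      C (((n : ℚ) * ∏ i ∈ Finset.Icc 1 j, ((n : ℚ) ^ 2 - (2 * (i : ℚ) - 1) ^ 2)) /
          (2 ^ (2 * j) * ((2 * j + 1).factorial : ℚ))) * X ^ j +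
    X ^ ((n - 1) / 2)

/-- `(X+2)/2 ∈ ℚ[X]`. -/
def halfXAddTwo : ℚ[X] := C (1 / 2 : ℚ) * (X + 2)


namespace FP14

def P (k j : ℕ) : ℚ := ∏ i ∈ Finset.range (2 * j), ((k : ℚ) + 1 - j + i)

def a (k j : ℕ) : ℚ := (-2) ^ j * (2 * k + 1) * P k j / ((2 * j + 1).factorial : ℚ)

lemma P_zero (k : ℕ) : P k 0 = 1 := by simp [P]

/-- P(k,m+1) = (k-m)(k-m+1) P(k+1,m) -/
lemma P_succ_low (k m : ℕ) :
    P k (m + 1) = ((k : ℚ) - m) * ((k : ℚ) - m + 1) * P (k + 1) m := by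
  have h : 2 * (m + 1) = (2 * m + 1) + 1 := by ring
  rw [P, h, Finset.prod_range_succ', Finset.prod_range_succ', P]
  push_cast
  ring_nf

/-- P(k+1,m+1) = (k+1-m)(k+m+2) P(k+1,m) -/
lemma P_succ_mid (k m : ℕ) :
    P (k + 1) (m + 1) = ((k : ℚ) + 1 - m) * ((k : ℚ) + m + 2) * P (k + 1) m := by
  have h : 2 * (m + 1) = (2 * m + 1) + 1 := by ring
  rw [P, h, Finset.prod_range_succ, Finset.prod_range_succ', P]
  push_cast
  ring_nf

/-- P(k+2,m+1) = (k+m+2)(k+m+3) P(k+1,m) -/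
lemma P_succ_high (k m : ℕ) :
    P (k + 2) (m + 1) = ((k : ℚ) + m + 2) * ((k : ℚ) + m + 3) * P (k + 1) m := by
  have h : 2 * (m + 1) = (2 * m + 1) + 1 := by ring
  rw [P, h, Finset.prod_range_succ, Finset.prod_range_succ, P]
  push_cast
  ring_nf

/-- same-k recursion: P(k,m+1) = (k-m)(k+m+1) P(k,m) -/
lemma P_succ_same (k m : ℕ) :
    P k (m + 1) = ((k : ℚ) - m) * ((k : ℚ) + m + 1) * P k m := by
  have h : 2 * (m + 1) = (2 * m + 1) + 1 := by ring
  rw [P, h, Finset.prod_range_succ, Finset.prod_range_succ', P]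
  push_cast
  ring_nf

end FP14

namespace FP14

lemma fact_succ2 (m : ℕ) :
    ((2 * (m + 1) + 1).factorial : ℚ)
      = (2 * m + 3) * (2 * m + 2) * ((2 * m + 1).factorial : ℚ) := by
  have h : 2 * (m + 1) + 1 = (2 * m + 1) + 1 + 1 := by ring
  rw [h, Nat.factorial_succ, Nat.factorial_succ]
  push_cast; ring

lemma fact_ne (n : ℕ) : ((n.factorial : ℚ)) ≠ 0 := by
  exact_mod_cast n.factorial_ne_zero

/-- key identity -/
lemma key (k m : ℕ) :
    a (k + 2) (m + 1) + a k (m + 1) = 2 * a (k + 1) (m + 1) - 2 * a (k + 1) m := by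
  unfold a
  rw [P_succ_high, P_succ_mid, P_succ_low, fact_succ2]
  have h1 : ((2 * m + 1).factorial : ℚ) ≠ 0 := fact_ne _
  have h2 : (2 * (m : ℚ) + 3) ≠ 0 := by positivity
  have h3 : (2 * (m : ℚ) + 2) ≠ 0 := by positivity
  field_simp
  push_cast
  ring

lemma key0 (k : ℕ) : a (k + 2) 0 + a k 0 = 2 * a (k + 1) 0 := by
  unfold a
  simp [P_zero]
  ring

lemma a_zero (k j : ℕ) (h : k < j) : a k j = 0 := by
  unfold a
  have : P k j = 0 := by
    apply Finset.prod_eq_zero (i := j - 1 - k)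
    · simp only [Finset.mem_range]; omega
    · have h1 : ((j - 1 - k : ℕ) : ℚ) = (j : ℚ) - 1 - k := by
        push_cast [Nat.cast_sub (by omega : k ≤ j - 1), Nat.cast_sub (by omega : 1 ≤ j)]
        ring
      rw [h1]; ring
  rw [this]; simp

lemma a_zero' (k : ℕ) : a k 0 = 2 * k + 1 := by
  unfold a; simp [P_zero]

lemma a_top (k : ℕ) : a k k = (-2) ^ k := by
  unfold a
  have hP : P k k = ((2 * k).factorial : ℚ) := by
    rw [P]
    have : ∀ i ∈ Finset.range (2 * k), ((k : ℚ) + 1 - k + i) = ((i + 1 : ℕ) : ℚ) := by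
      intro i _; push_cast; ring
    rw [Finset.prod_congr rfl this, ← Nat.cast_prod, Finset.prod_range_add_one_eq_factorial]
  rw [hP]
  have h : ((2 * k + 1).factorial : ℚ) = (2 * k + 1) * ((2 * k).factorial : ℚ) := by
    rw [Nat.factorial_succ]; push_cast; ring
  rw [h]
  have := fact_ne (2 * k)
  field_simp

def v (k : ℕ) : ℚ := ∑ j ∈ Finset.range (k + 1), a k j

lemma v_rec (k : ℕ) : v (k + 2) = - v k := by
  have hv : v k = ∑ j ∈ Finset.range (k + 3), a k j := by
    rw [v, Finset.sum_range_succ (n := k + 2), Finset.sum_range_succ (n := k + 1),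
      a_zero k (k + 1) (by omega), a_zero k (k + 2) (by omega)]
    ring
  have h : v (k + 2) + v k = 0 := by
    rw [v, hv, ← Finset.sum_add_distrib]
    have : ∀ j ∈ Finset.range (k + 2 + 1), a (k + 2) j + a k j = (if j = 0 then 2 * a (k+1) 0 else 2 * a (k+1) j - 2 * a (k+1) (j-1)) := by
      intro j _
      cases j with
      | zero => simpa using key0 k
      | succ m => simpa using key k m
    rw [Finset.sum_congr rfl this, Finset.sum_range_succ']
    simp only [Nat.succ_ne_zero, if_false, if_pos rfl, Nat.add_sub_cancel]
    have htel := Finset.sum_range_sub (f := fun i => 2 * a (k + 1) i) (k + 2)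
    rw [htel, a_zero (k + 1) (k + 2) (by omega)]
    simp
  linarith

end FP14

namespace FP14

def g (k : ℕ) : ℚ := if k % 4 < 2 then 1 else -1

lemma g_rec (k : ℕ) : g (k + 2) = - g k := by
  unfold g; split_ifs with h1 h2 <;> first | (exfalso; omega) | norm_num

lemma v_zero : v 0 = 1 := by simp [v, a_zero']

lemma v_one : v 1 = 1 := by
  rw [v]
  rw [show (1:ℕ)+1 = 2 from rfl, Finset.sum_range_succ, Finset.sum_range_one,
    a_zero', a_top]
  norm_num

lemma v_eq_g : ∀ k, v k = g k := by
  intro k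
  induction k using Nat.twoStepInduction with
  | zero => rw [v_zero]; rfl
  | one => rw [v_one]; rfl
  | more n ih _ => rw [v_rec, g_rec, ih]

lemma P_Icc (k j : ℕ) :
    P k j = ∏ i ∈ Finset.Icc 1 j, (((k : ℚ) + i) * ((k : ℚ) + 1 - i)) := by
  induction j with
  | zero => simp [P_zero]
  | succ m ih =>
    rw [P_succ_same, ih, Finset.prod_Icc_succ_top (by omega : 1 ≤ m + 1)]
    push_cast
    ring

lemma coeff_eq (k j : ℕ) :
    (((2 * k + 1 : ℕ) : ℚ) *
        ∏ i ∈ Finset.Icc 1 j, (((2 * k + 1 : ℕ) : ℚ) ^ 2 - (2 * (i : ℚ) - 1) ^ 2)) /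
        (2 ^ (2 * j) * ((2 * j + 1).factorial : ℚ)) * (-2) ^ j = a k j := by
  have hprod : (∏ i ∈ Finset.Icc 1 j, (((2 * k + 1 : ℕ) : ℚ) ^ 2 - (2 * (i : ℚ) - 1) ^ 2))
      = 4 ^ j * P k j := by
    rw [P_Icc]
    rw [show (4 : ℚ) ^ j = ∏ _i ∈ Finset.Icc 1 j, (4 : ℚ) by
      rw [Finset.prod_const, Nat.card_Icc]; norm_num]
    rw [← Finset.prod_mul_distrib]
    apply Finset.prod_congr rfl
    intro i _
    push_cast
    ring
  rw [hprod, a, show (2:ℚ)^(2*j) = 4^j by rw [pow_mul]; norm_num]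
  have h1 : ((2 * j + 1).factorial : ℚ) ≠ 0 := fact_ne _
  field_simp
  push_cast
  ring

lemma eval_eq_v (k : ℕ) (hk : 1 ≤ k) : (fPoly (2 * k + 1)).eval (-2) = v k := by
  have h1 : (2 * k + 1 - 3) / 2 = k - 1 := by omega
  have h2 : (2 * k + 1 - 1) / 2 = k := by omega
  rw [fPoly, h1, h2]
  simp only [eval_add, eval_C, eval_pow, eval_X, eval_finset_sum, eval_mul]
  have hsum : ∑ j ∈ Finset.Icc 1 (k - 1),
      (((2 * k + 1 : ℕ) : ℚ) *
        ∏ i ∈ Finset.Icc 1 j, (((2 * k + 1 : ℕ) : ℚ) ^ 2 - (2 * (i : ℚ) - 1) ^ 2)) /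
        (2 ^ (2 * j) * ((2 * j + 1).factorial : ℚ)) * (-2) ^ j
      = ∑ j ∈ Finset.Icc 1 (k - 1), a k j := by
    exact Finset.sum_congr rfl fun j _ => coeff_eq k j
  rw [hsum]
  have hv : v k = a k 0 + (∑ j ∈ Finset.Icc 1 (k - 1), a k j) + a k k := by
    rw [v, Finset.sum_range_succ, show k = (k - 1) + 1 by omega, Finset.sum_range_succ']
    rw [show (k - 1) + 1 = k by omega]
    have : ∑ j ∈ Finset.Icc 1 (k - 1), a k j
        = ∑ i ∈ Finset.range (k - 1), a k (1 + i) := by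
      rw [show Finset.Icc 1 (k - 1) = Finset.Ico 1 k by
        rw [← Finset.Ico_add_one_right_eq_Icc, show (k - 1) + 1 = k by omega],
        Finset.sum_Ico_eq_sum_range, show k - 1 = k - 1 by rfl]
    rw [this]
    have : ∀ i ∈ Finset.range (k - 1), a k (i + 1) = a k (1 + i) := by
      intro i _; rw [Nat.add_comm]
    rw [Finset.sum_congr rfl this]
    ring
  rw [hv, a_zero', a_top]
  push_cast
  ring

lemma sincos (k : ℕ) :
    Real.sin (k * Real.pi / 2) + Real.cos (k * Real.pi / 2) = ((g k : ℚ) : ℝ) := by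
  induction k using Nat.twoStepInduction with
  | zero => simp [g]
  | one => simp [g]
  | more n ih _ =>
    have harg : ((n + 2 : ℕ) : ℝ) * Real.pi / 2 = (n : ℝ) * Real.pi / 2 + Real.pi := by
      push_cast; ring
    rw [harg, Real.sin_add_pi, Real.cos_add_pi, g_rec]
    push_cast
    linarith [ih]

end FP14


/-- For odd `n = 2k+1` with `k ≥ 1`,
`f_n(−2) = sin(kπ/2) + cos(kπ/2)`; in particular `f_n(−2) = 1` if `k ≡ 0, 1 (mod 4)` and
`f_n(−2) = −1` if `k ≡ 2, 3 (mod 4)`, so `f_n(−2) = ±1`. -/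
theorem fPoly_eval_neg_two (k : ℕ) (hk : 1 ≤ k) :
    (((fPoly (2 * k + 1)).eval (-2) : ℚ) : ℝ) =
        Real.sin (k * Real.pi / 2) + Real.cos (k * Real.pi / 2) ∧
    (k % 4 = 0 ∨ k % 4 = 1 → (fPoly (2 * k + 1)).eval (-2) = 1) ∧
    (k % 4 = 2 ∨ k % 4 = 3 → (fPoly (2 * k + 1)).eval (-2) = -1) := by
  have hv := FP14.eval_eq_v k hk
  have hg := FP14.v_eq_g k
  refine ⟨?_, ?_, ?_⟩
  · rw [hv, hg, ← FP14.sincos k]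
  · intro h; rw [hv, hg, FP14.g, if_pos (by omega)]
  · intro h; rw [hv, hg, FP14.g, if_neg (by omega)]
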